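/- (Abstract condition-number estimate underlying the paper's condition number theorem.) Let N ≥ 1 and d ≥ 1 be natural numbers, h > 0, V a real normed vector space, and Φ : ℝᴺ → V a linear map such that c₁·h^{d/2}·‖X‖ ≤ ‖Φ(X)‖ ≤ c₂·h^{d/2}·‖X‖ for all X ∈ ℝᴺ, where c₁, c₂ > 0 and ‖X‖ is the Euclidean norm. Let A : V × V → ℝ be a bilinear form and m, M > 0 constants with A(v, w) ≤ M·h^{-2}·‖v‖·‖w‖ and A(v, v) ≥ m·h^{-1}·‖v‖² for all v, w ∈ V. Let 𝒜 : ℝᴺ → ℝᴺ be the unique linear map with ⟨𝒜X, Y⟩ = A(Φ(X), Φ(Y)) for all X, Y ∈ ℝᴺ. Then 𝒜 is bijective and its condition number satisfies κ(𝒜) = ‖𝒜‖·‖𝒜⁻¹‖ ≤ (c₂/c₁)²·(M/m)·h^{-1}, where ‖·‖ denotes the operator norm induced by the Euclidean norm on ℝᴺ. -/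

import Mathlib

open scoped RealInnerProductSpace

/-- Abstract condition-number estimate: boundedness and coercivity of the bilinear form
combined with a two-sided mass-matrix scaling of the basis expansion yield
`κ(𝒜) ≤ (c₂/c₁)² (M/m) h⁻¹`. -/
theorem abstract_condition_number {V : Type*} [NormedAddCommGroup V] [NormedSpace ℝ V]
    (N d : ℕ) (hN : 1 ≤ N) (hd : 1 ≤ d) (h : ℝ) (hh : 0 < h)
    (c₁ c₂ : ℝ) (hc₁ : 0 < c₁) (hc₂ : 0 < c₂)
    (Φ : EuclideanSpace ℝ (Fin N) →ₗ[ℝ] V)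
    (hΦl : ∀ X : EuclideanSpace ℝ (Fin N), c₁ * h ^ ((d : ℝ) / 2) * ‖X‖ ≤ ‖Φ X‖)
    (hΦu : ∀ X : EuclideanSpace ℝ (Fin N), ‖Φ X‖ ≤ c₂ * h ^ ((d : ℝ) / 2) * ‖X‖)
    (A : V →ₗ[ℝ] V →ₗ[ℝ] ℝ) (m M : ℝ) (hm : 0 < m) (hM : 0 < M)
    (hbdd : ∀ v w : V, A v w ≤ M / h ^ 2 * ‖v‖ * ‖w‖)
    (hcoer : ∀ v : V, A v v ≥ m / h * ‖v‖ ^ 2)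
    (𝒜 : EuclideanSpace ℝ (Fin N) →L[ℝ] EuclideanSpace ℝ (Fin N))
    (h𝒜 : ∀ X Y : EuclideanSpace ℝ (Fin N), ⟪𝒜 X, Y⟫ = A (Φ X) (Φ Y)) :
    Function.Bijective 𝒜 ∧
      ∀ B : EuclideanSpace ℝ (Fin N) →L[ℝ] EuclideanSpace ℝ (Fin N),
        ((∀ X, B (𝒜 X) = X) ∧ (∀ Y, 𝒜 (B Y) = Y)) →
          ‖𝒜‖ * ‖B‖ ≤ (c₂ / c₁) ^ 2 * (M / m) / h := by
  set p := h ^ ((d : ℝ) / 2) with hp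
  have hp0 : 0 < p := Real.rpow_pos_of_pos hh _
  set CU := M / h ^ 2 * (c₂ * p) ^ 2 with hCU
  set CL := m / h * (c₁ * p) ^ 2 with hCL
  have hCU0 : 0 < CU := by positivity
  have hCL0 : 0 < CL := by positivity
  -- upper bound: ‖𝒜 X‖ ≤ CU * ‖X‖
  have hupper : ∀ X : EuclideanSpace ℝ (Fin N), ‖𝒜 X‖ ≤ CU * ‖X‖ := by
    intro X
    rcases eq_or_ne (𝒜 X) 0 with h0 | h0
    · rw [h0, norm_zero]; positivity
    have hsq : ‖𝒜 X‖ ^ 2 = ⟪𝒜 X, 𝒜 X⟫ := (real_inner_self_eq_norm_sq _).symm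
    have h1 : ‖𝒜 X‖ ^ 2 ≤ M / h ^ 2 * ‖Φ X‖ * ‖Φ (𝒜 X)‖ := by
      rw [hsq, h𝒜]; exact hbdd _ _
    have h2 : M / h ^ 2 * ‖Φ X‖ * ‖Φ (𝒜 X)‖ ≤
        M / h ^ 2 * (c₂ * p * ‖X‖) * (c₂ * p * ‖𝒜 X‖) := by
      have := hΦu X
      have := hΦu (𝒜 X)
      have hΦX : (0:ℝ) ≤ ‖Φ X‖ := norm_nonneg _
      gcongr <;> first | positivity | exact hΦu X | exact hΦu (𝒜 X)
    have h3 : ‖𝒜 X‖ ^ 2 ≤ CU * ‖X‖ * ‖𝒜 X‖ := by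
      calc ‖𝒜 X‖ ^ 2 ≤ M / h ^ 2 * (c₂ * p * ‖X‖) * (c₂ * p * ‖𝒜 X‖) := h1.trans h2
        _ = CU * ‖X‖ * ‖𝒜 X‖ := by rw [hCU]; ring
    have hnz : 0 < ‖𝒜 X‖ := norm_pos_iff.mpr h0
    nlinarith
  -- lower bound: CL * ‖X‖ ≤ ‖𝒜 X‖
  have hlower : ∀ X : EuclideanSpace ℝ (Fin N), CL * ‖X‖ ≤ ‖𝒜 X‖ := by
    intro X
    rcases eq_or_ne X 0 with h0 | h0
    · simp [h0]
    have hnz : 0 < ‖X‖ := norm_pos_iff.mpr h0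
    have h1 : CL * ‖X‖ ^ 2 ≤ ⟪𝒜 X, X⟫ := by
      rw [h𝒜]
      have hc := hcoer (Φ X)
      have h2 : CL * ‖X‖ ^ 2 ≤ m / h * ‖Φ X‖ ^ 2 := by
        have := hΦl X
        have hln : (0:ℝ) ≤ c₁ * p * ‖X‖ := by positivity
        have : (c₁ * p * ‖X‖) ^ 2 ≤ ‖Φ X‖ ^ 2 := by
          apply pow_le_pow_left₀ hln (hΦl X)
        calc CL * ‖X‖ ^ 2 = m / h * (c₁ * p * ‖X‖) ^ 2 := by rw [hCL]; ring
          _ ≤ m / h * ‖Φ X‖ ^ 2 := by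
              have : 0 ≤ m / h := by positivity
              exact mul_le_mul_of_nonneg_left ‹(c₁ * p * ‖X‖) ^ 2 ≤ ‖Φ X‖ ^ 2› this
      linarith
    have h2 : ⟪𝒜 X, X⟫ ≤ ‖𝒜 X‖ * ‖X‖ := real_inner_le_norm _ _
    have h3 : CL * ‖X‖ * ‖X‖ ≤ ‖𝒜 X‖ * ‖X‖ := by
      rw [pow_two] at h1; linarith [h1.trans h2]
    exact (mul_le_mul_iff_of_pos_right hnz).mp h3
  have hinj : Function.Injective 𝒜 := by
    intro X Y hXY
    have : 𝒜 (X - Y) = 0 := by rw [map_sub, hXY, sub_self]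
    have h1 := hlower (X - Y)
    rw [this, norm_zero] at h1
    have : ‖X - Y‖ ≤ 0 := by nlinarith [norm_nonneg (X - Y)]
    have : X - Y = 0 := norm_le_zero_iff.mp this
    exact sub_eq_zero.mp this
  have hbij : Function.Bijective 𝒜 := by
    refine ⟨hinj, ?_⟩
    have : Function.Injective (𝒜 : EuclideanSpace ℝ (Fin N) →ₗ[ℝ] EuclideanSpace ℝ (Fin N)) :=
      hinj
    exact LinearMap.injective_iff_surjective.mp this
  refine ⟨hbij, ?_⟩
  intro B ⟨hBl, hBr⟩
  have hAnorm : ‖𝒜‖ ≤ CU := ContinuousLinearMap.opNorm_le_bound _ hCU0.le hupper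
  have hBnorm : ‖B‖ ≤ CL⁻¹ := by
    apply ContinuousLinearMap.opNorm_le_bound _ (by positivity)
    intro Y
    have h1 := hlower (B Y)
    rw [hBr Y] at h1
    rw [inv_mul_eq_div, le_div_iff₀ hCL0]
    linarith
  have key : CU * CL⁻¹ = (c₂ / c₁) ^ 2 * (M / m) / h := by
    rw [hCU, hCL]
    field_simp
  calc ‖𝒜‖ * ‖B‖ ≤ CU * CL⁻¹ :=
        mul_le_mul hAnorm hBnorm (norm_nonneg _) hCU0.le
    _ = (c₂ / c₁) ^ 2 * (M / m) / h := key
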